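/- A set S ⊆ ℝⁿ has the exterior cone property in the sense of Vicente–Custódio (there exist at each boundary point x a cone K_x = x + ℝ₊*·U with U nonempty relatively open in the sphere, a neighborhood O_x of x, and an angle θ > 0 such that E_x := K_x ∩ O_x ⊆ ℝⁿ \ S and the unsigned angle between e − x and a − x is at least θ for all e ∈ E_x and a ∈ S ∩ O_x \ {x}) if and only if its complement ℝⁿ \ S has the interior cone property (at each boundary point x there exist a nonempty relatively open U ⊆ 𝕊ⁿ⁻¹, the cone K := ℝ₊*·U, and a neighborhood O of 0 with (x + K) ∩ (x + O) ⊆ ℝⁿ \ S). -/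

import Mathlib

open InnerProductGeometry

/-- The interior cone property of Definition 5.2. -/
def HasICP {n : ℕ} (T : Set (EuclideanSpace ℝ (Fin n))) : Prop :=
  ∀ x ∈ frontier T, ∃ U : Set (EuclideanSpace ℝ (Fin n)),
    U.Nonempty ∧ U ⊆ Metric.sphere 0 1 ∧
    (∃ V, IsOpen V ∧ U = V ∩ Metric.sphere 0 1) ∧
    ∃ O : Set (EuclideanSpace ℝ (Fin n)), IsOpen O ∧ (0 : EuclideanSpace ℝ (Fin n)) ∈ O ∧
      {y | ∃ l : ℝ, 0 < l ∧ ∃ u ∈ U, y = x + l • u} ∩ {y | y - x ∈ O} ⊆ T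

/-- The exterior cone property of Vicente–Custódio. -/
def HasECP_VC {n : ℕ} (S : Set (EuclideanSpace ℝ (Fin n))) : Prop :=
  ∀ x ∈ frontier S, ∃ U : Set (EuclideanSpace ℝ (Fin n)),
    U.Nonempty ∧ U ⊆ Metric.sphere 0 1 ∧
    (∃ V, IsOpen V ∧ U = V ∩ Metric.sphere 0 1) ∧
    ∃ O : Set (EuclideanSpace ℝ (Fin n)), IsOpen O ∧ x ∈ O ∧
      ∃ θ : ℝ, 0 < θ ∧
        ({y | ∃ l : ℝ, 0 < l ∧ ∃ u ∈ U, y = x + l • u} ∩ O ⊆ Sᶜ) ∧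
        ∀ e ∈ {y | ∃ l : ℝ, 0 < l ∧ ∃ u ∈ U, y = x + l • u} ∩ O,
          ∀ a ∈ (S ∩ O) \ {x}, θ ≤ angle (e - x) (a - x)

lemma arccos_anti {a b : ℝ} (h : a ≤ b) : Real.arccos b ≤ Real.arccos a := by
  unfold Real.arccos
  have := Real.monotone_arcsin h
  linarith

lemma angle_ge_of_sep {n : ℕ} {u v : EuclideanSpace ℝ (Fin n)} {d : ℝ}
    (hu : ‖u‖ = 1) (hv : ‖v‖ = 1) (hd0 : 0 ≤ d) (hd : d ≤ ‖u - v‖) :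
    Real.arccos (1 - d ^ 2 / 2) ≤ angle u v := by
  have hnn : (0:ℝ) ≤ ‖u - v‖ := norm_nonneg _
  have hsq : ‖u - v‖ ^ 2 = 2 - 2 * inner ℝ u v := by
    rw [@norm_sub_sq_real]
    rw [hu, hv]; ring
  have hinner : inner ℝ u v ≤ 1 - d ^ 2 / 2 := by
    nlinarith [sq_nonneg (‖u - v‖ - d), mul_self_le_mul_self hd0 hd]
  have : angle u v = Real.arccos (inner ℝ u v) := by
    unfold angle
    rw [hu, hv]; norm_num
  rw [this]
  exact arccos_anti hinner

/-- A set has the Vicente–Custódio exterior cone property iff its complement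
has the interior cone property. -/
theorem ECP_iff_ICP_compl {n : ℕ} (S : Set (EuclideanSpace ℝ (Fin n))) :
    HasECP_VC S ↔ HasICP Sᶜ := by
  constructor
  · intro h x hx
    rw [frontier_compl] at hx
    obtain ⟨U, hUne, hUs, hUV, O, hO, hxO, θ, hθ, hsub, _⟩ := h x hx
    refine ⟨U, hUne, hUs, hUV, (fun z => x + z) ⁻¹' O,
      hO.preimage (by continuity), by simpa using hxO, ?_⟩
    rintro y ⟨hy1, hy2⟩
    apply hsub
    refine ⟨hy1, ?_⟩
    have : x + (y - x) ∈ O := hy2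
    simpa using this
  · intro h x hx
    rw [← frontier_compl] at hx
    obtain ⟨U, ⟨u₀, hu₀⟩, hUs, ⟨V, hV, hUV⟩, O, hO, h0O, hsub⟩ := h x hx
    have hu₀V : u₀ ∈ V := (hUV ▸ hu₀).1
    have hu₀s : u₀ ∈ Metric.sphere (0 : EuclideanSpace ℝ (Fin n)) 1 := hUs hu₀
    obtain ⟨ε, hε, hball⟩ := Metric.isOpen_iff.1 hV u₀ hu₀V
    set U' : Set (EuclideanSpace ℝ (Fin n)) := Metric.ball u₀ (ε/2) ∩ Metric.sphere 0 1
    have hU'U : U' ⊆ U := by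
      rintro z ⟨hz1, hz2⟩
      rw [hUV]
      exact ⟨hball (Metric.ball_subset_ball (by linarith) hz1), hz2⟩
    set O' : Set (EuclideanSpace ℝ (Fin n)) := {y | y - x ∈ O}
    have hO' : IsOpen O' := hO.preimage (by continuity)
    have hxO' : x ∈ O' := by simp [O', h0O]
    refine ⟨U', ⟨u₀, Metric.mem_ball_self (by linarith), hu₀s⟩, Set.inter_subset_right,
      ⟨Metric.ball u₀ (ε/2), Metric.isOpen_ball, rfl⟩, O', hO', hxO',
      Real.arccos (1 - (ε/2) ^ 2 / 2), ?_, ?_, ?_⟩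
    · rw [Real.arccos_pos]
      nlinarith
    · rintro y ⟨⟨l, hl, u, hu, rfl⟩, hy2⟩
      exact hsub ⟨⟨l, hl, u, hU'U hu, rfl⟩, hy2⟩
    · rintro e ⟨⟨l, hl, u, ⟨hub, hus⟩, rfl⟩, heO⟩ a ⟨⟨haS, haO⟩, hax⟩
      have hax' : a ≠ x := by simpa using hax
      have hne : a - x ≠ 0 := sub_ne_zero.2 hax'
      have hnorm : (0:ℝ) < ‖a - x‖ := norm_pos_iff.2 hne
      set v : EuclideanSpace ℝ (Fin n) := ‖a - x‖⁻¹ • (a - x)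
      have hvnorm : ‖v‖ = 1 := by
        simp [v, norm_smul, abs_of_pos (inv_pos.2 hnorm), inv_mul_cancel₀ hnorm.ne']
      have hvU : v ∉ U := by
        intro hvU
        have : a ∈ Sᶜ := hsub ⟨⟨‖a - x‖, hnorm, v, hvU, by
          simp [v, smul_smul, mul_inv_cancel₀ hnorm.ne']⟩, haO⟩
        exact this haS
      have hvball : v ∉ Metric.ball u₀ ε := by
        intro hb
        exact hvU (hUV ▸ ⟨hball hb, by simpa using hvnorm⟩)
      have hvdist : ε ≤ ‖v - u₀‖ := by
        by_contra hc
        exact hvball (by simpa [Metric.mem_ball, dist_eq_norm] using lt_of_not_ge hc)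
      have hunorm : ‖u‖ = 1 := by simpa using hus
      have hudist : ‖u - u₀‖ < ε/2 := by
        simpa [Metric.mem_ball, dist_eq_norm] using hub
      have hsep : ε/2 ≤ ‖u - v‖ := by
        have h1 : ‖v - u₀‖ ≤ ‖v - u‖ + ‖u - u₀‖ := by
          have := dist_triangle v u u₀
          simpa [dist_eq_norm] using this
        have h2 : ‖v - u‖ = ‖u - v‖ := norm_sub_rev _ _
        linarith
      have key := angle_ge_of_sep hunorm hvnorm (by linarith) hsep
      have h1 : x + l • u - x = l • u := by abel
      have h2 : angle (l • u) (a - x) = angle u v := by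
        rw [angle_smul_left_of_pos _ _ hl]
        have : a - x = ‖a - x‖ • v := by
          simp [v, smul_smul, mul_inv_cancel₀ hnorm.ne']
        rw [this, angle_smul_right_of_pos _ _ hnorm]
      rw [h1, h2]
      exact key
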